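/- arXiv:2002.09427 — 2 statements merged into one kernel-verified Lean document; each statement's English description precedes it below -/
import Mathlib

section
/- If W_ψ(δ_x Q^n, π) ≤ Λ(x) r(n) with Λ ∈ L²(π) and ∑_{n=0}^∞ r(n) < ∞, then for every 1-Lipschitz, square-π-integrable, π-mean-zero function g, ∑_{n=0}^∞ ‖Q^n g‖_{L²(π)} < ∞. -/
open MeasureTheory ProbabilityTheory Filter
open scoped ENNReal

/-- The `L¹`-Wasserstein distance between two measures on a metric space:
infimum over couplings of the integral of the distance. -/
noncomputable def wassDist {X : Type*} [MeasurableSpace X] [PseudoEMetricSpace X]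
    (μ ν : Measure X) : ℝ≥0∞ :=
  ⨅ γ ∈ {γ : Measure (X × X) | γ.map Prod.fst = μ ∧ γ.map Prod.snd = ν},
    ∫⁻ q, edist q.1 q.2 ∂γ

/-- The `n`-step transition kernel `Q^n`. -/
noncomputable def kiter {X : Type*} [MeasurableSpace X] (Q : Kernel X X) : ℕ → Kernel X X
  | 0 => Kernel.id
  | n + 1 => Q.comp (kiter Q n)

/-- If `W_ψ(δ_x Q^n, π) ≤ Λ(x) r(n)` with `Λ ∈ L²(π)` and `∑ r(n) < ∞`, then for every
1-Lipschitz, square-`π`-integrable, `π`-mean-zero `g`, `∑_{n} ‖Q^n g‖_{L²(π)} < ∞`. -/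
theorem stmt_3 {X : Type*} [MeasurableSpace X] [MetricSpace X] [PolishSpace X] [BorelSpace X]
    (Q : Kernel X X) [IsMarkovKernel Q] (π : Measure X) [IsProbabilityMeasure π]
    (hinv : π.bind (fun x => Q x) = π)
    (Λ : X → ℝ) (hΛ : ∀ x, 0 ≤ Λ x) (hΛ2 : Integrable (fun x => (Λ x) ^ 2) π)
    (r : ℕ → ℝ) (hr : ∀ n, 0 ≤ r n) (hrsum : Summable r)
    (hW : ∀ x n, wassDist ((kiter Q n) x) π ≤ ENNReal.ofReal (Λ x * r n))
    (g : X → ℝ) (hg : LipschitzWith 1 g) (hg0 : ∫ x, g x ∂π = 0)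
    (hg2 : Integrable (fun x => (g x) ^ 2) π)
    (hgint : ∀ k x, Integrable g ((kiter Q k) x)) :
    Summable (fun n : ℕ => Real.sqrt (∫ x, (∫ z, g z ∂((kiter Q n) x)) ^ 2 ∂π)) := by

  -- `g` is integrable with respect to `π`
  have hmg : Measurable g := hg.continuous.measurable
  have hgπ : Integrable g π := by
    refine Integrable.mono' ((integrable_const (1:ℝ)).add hg2)
      hmg.aestronglyMeasurable (Filter.Eventually.of_forall fun x => ?_)
    have : |g x| ≤ 1 + (g x)^2 := by nlinarith [sq_nonneg (|g x| - 1), abs_nonneg (g x), sq_abs (g x)]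
    simpa [Real.norm_eq_abs] using this
  -- key pointwise bound
  have key : ∀ (n : ℕ) (x : X), |∫ z, g z ∂((kiter Q n) x)| ≤ Λ x * r n := by
    intro n x
    have hle : ENNReal.ofReal |∫ z, g z ∂((kiter Q n) x)| ≤ wassDist ((kiter Q n) x) π := by
      rw [wassDist]
      refine le_iInf fun γ => le_iInf fun hγ => ?_
      obtain ⟨h1, h2⟩ := hγ
      have hf1 : Integrable (fun q : X × X => g q.1) γ := by
        have : Integrable g (γ.map Prod.fst) := h1 ▸ hgint n x
        exact (integrable_map_measure hmg.aestronglyMeasurable measurable_fst.aemeasurable).mp this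
      have hf2 : Integrable (fun q : X × X => g q.2) γ := by
        have : Integrable g (γ.map Prod.snd) := h2 ▸ hgπ
        exact (integrable_map_measure hmg.aestronglyMeasurable measurable_snd.aemeasurable).mp this
      have heq : ∫ z, g z ∂((kiter Q n) x) = ∫ q : X × X, (g q.1 - g q.2) ∂γ := by
        rw [integral_sub hf1 hf2]
        have e1 : ∫ q : X × X, g q.1 ∂γ = ∫ z, g z ∂((kiter Q n) x) := by
          rw [← h1, integral_map measurable_fst.aemeasurable hmg.aestronglyMeasurable]
        have e2 : ∫ q : X × X, g q.2 ∂γ = ∫ z, g z ∂π := by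
          rw [← h2, integral_map measurable_snd.aemeasurable hmg.aestronglyMeasurable]
        rw [e1, e2, hg0, sub_zero]
      rw [heq]
      calc ENNReal.ofReal |∫ q : X × X, (g q.1 - g q.2) ∂γ|
          ≤ ENNReal.ofReal (∫ q : X × X, |g q.1 - g q.2| ∂γ) :=
            ENNReal.ofReal_le_ofReal (by
              simpa [Real.norm_eq_abs] using
                norm_integral_le_integral_norm (fun q : X × X => g q.1 - g q.2) (μ := γ))
        _ = ∫⁻ q : X × X, ENNReal.ofReal |g q.1 - g q.2| ∂γ := by
            have habs : Integrable (fun q : X × X => |g q.1 - g q.2|) γ := by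
              simpa using (hf1.sub hf2).abs
            rw [ofReal_integral_eq_lintegral_ofReal habs
              (Filter.Eventually.of_forall fun q => abs_nonneg _)]
        _ ≤ ∫⁻ q : X × X, edist q.1 q.2 ∂γ := by
            refine lintegral_mono fun q => ?_
            have := hg q.1 q.2
            rw [ENNReal.coe_one, one_mul, edist_dist, Real.dist_eq] at this
            exact this
    have := hle.trans (hW x n)
    rw [ENNReal.ofReal_le_ofReal_iff (mul_nonneg (hΛ _) (hr _))] at this
    exact this
  set C : ℝ := ∫ x, (Λ x)^2 ∂π with hC
  have hC0 : 0 ≤ C := integral_nonneg fun x => sq_nonneg _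
  have hmain : ∀ n : ℕ, Real.sqrt (∫ x, (∫ z, g z ∂((kiter Q n) x)) ^ 2 ∂π)
      ≤ r n * Real.sqrt C := by
    intro n
    have hint : ∫ x, (∫ z, g z ∂((kiter Q n) x)) ^ 2 ∂π ≤ (r n)^2 * C := by
      have hi : Integrable (fun x => (r n)^2 * (Λ x)^2) π := hΛ2.const_mul _
      have := integral_mono_of_nonneg
        (Filter.Eventually.of_forall fun x => sq_nonneg ((∫ z, g z ∂((kiter Q n) x))))
        hi (Filter.Eventually.of_forall fun x => ?_)
      · rwa [integral_const_mul] at this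
      · have h1 : |∫ z, g z ∂((kiter Q n) x)| ≤ Λ x * r n := key n x
        calc (∫ z, g z ∂((kiter Q n) x))^2 = |∫ z, g z ∂((kiter Q n) x)|^2 := (sq_abs _).symm
          _ ≤ (Λ x * r n)^2 := by
              exact pow_le_pow_left₀ (abs_nonneg _) h1 2
          _ = (r n)^2 * (Λ x)^2 := by ring
    calc Real.sqrt (∫ x, (∫ z, g z ∂((kiter Q n) x)) ^ 2 ∂π)
        ≤ Real.sqrt ((r n)^2 * C) := Real.sqrt_le_sqrt hint
      _ = r n * Real.sqrt C := by
          rw [Real.sqrt_mul (sq_nonneg _), Real.sqrt_sq (hr n)]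
  exact Summable.of_nonneg_of_le (fun n => Real.sqrt_nonneg _) hmain
    (hrsum.mul_right (Real.sqrt C))
end

section
/- If a Markov chain is geometrically contractive with rate Δ ∈ (0,1) and its invariant measure π satisfies ∫∫ ψ(x,y)² π(dy) π(dx) < ∞, then for every 1-Lipschitz mean-zero g ∈ L²(π), ∑_{n=0}^∞ ‖Q^n g‖_{L²(π)} ≤ I / (1 − Δ), where I = [∫ (∫ ψ(x,y) π(dy))² π(dx)]^{1/2}. -/
open MeasureTheory ProbabilityTheory Filter
open scoped ENNReal

section Aux

variable {X : Type*} [MeasurableSpace X] [MetricSpace X] [BorelSpace X]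

lemma kiter_markov (Q : Kernel X X) [IsMarkovKernel Q] (n : ℕ) :
    IsMarkovKernel (kiter Q n) := by
  induction n with
  | zero => exact inferInstanceAs (IsMarkovKernel (Kernel.id : Kernel X X))
  | succ n ih =>
    haveI := ih
    exact inferInstanceAs (IsMarkovKernel (Q ∘ₖ kiter Q n))

lemma kiter_succ (Q : Kernel X X) [IsMarkovKernel Q] (n : ℕ) :
    kiter Q (n + 1) = (kiter Q n) ∘ₖ Q := by
  induction n with
  | zero =>
    show Q ∘ₖ Kernel.id = Kernel.id ∘ₖ Q
    rw [Kernel.comp_id, Kernel.id_comp]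
  | succ n ih =>
    haveI := kiter_markov Q n
    calc kiter Q (n + 2) = Q ∘ₖ (kiter Q n ∘ₖ Q) := by
          show Q ∘ₖ kiter Q (n + 1) = _; rw [ih]
      _ = (Q ∘ₖ kiter Q n) ∘ₖ Q := (Kernel.comp_assoc Q (kiter Q n) Q).symm
      _ = kiter Q (n + 1) ∘ₖ Q := rfl

lemma map_snd_compProd (μ : Measure X) [IsProbabilityMeasure μ]
    (κ : Kernel X X) [IsMarkovKernel κ] :
    (μ ⊗ₘ κ).map Prod.snd = μ.bind κ := by
  ext s hs
  rw [Measure.map_apply measurable_snd hs, Measure.compProd_apply (measurable_snd hs),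
    Measure.bind_apply hs (Kernel.measurable κ).aemeasurable]
  simp [Set.preimage_preimage]

lemma integrable_integral_bind (μ : Measure X) [IsProbabilityMeasure μ]
    (κ : Kernel X X) [IsMarkovKernel κ] {h : X → ℝ} (hm : StronglyMeasurable h)
    (hint : Integrable h (μ.bind κ)) :
    Integrable (fun x => ∫ y, h y ∂κ x) μ := by
  have h2 : Integrable (fun p : X × X => h p.2) (μ ⊗ₘ κ) := by
    rw [← map_snd_compProd μ κ] at hint
    exact (integrable_map_measure hm.aestronglyMeasurable measurable_snd.aemeasurable).mp hint
  have h3 := (Measure.integrable_compProd_iff h2.aestronglyMeasurable).mp h2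
  refine h3.2.mono' ?_ ?_
  · exact (StronglyMeasurable.integral_kernel_prod_right'
      (hm.comp_measurable measurable_snd)).aestronglyMeasurable
  · filter_upwards with x
    simpa using norm_integral_le_integral_norm (μ := κ x) h

lemma integral_bind' (μ : Measure X) [IsProbabilityMeasure μ]
    (κ : Kernel X X) [IsMarkovKernel κ] {h : X → ℝ} (hm : StronglyMeasurable h)
    (hint : Integrable h (μ.bind κ)) :
    ∫ y, h y ∂(μ.bind κ) = ∫ x, ∫ y, h y ∂κ x ∂μ := by
  have h2 : Integrable (fun p : X × X => h p.2) (μ ⊗ₘ κ) := by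
    rw [← map_snd_compProd μ κ] at hint
    exact (integrable_map_measure hm.aestronglyMeasurable measurable_snd.aemeasurable).mp hint
  rw [← map_snd_compProd μ κ,
    integral_map measurable_snd.aemeasurable hm.aestronglyMeasurable]
  exact Measure.integral_compProd h2

lemma sq_integral_le (μ : Measure X) [IsProbabilityMeasure μ] {φ : X → ℝ}
    (hφ : Integrable φ μ) (hφ2 : Integrable (fun x => φ x ^ 2) μ) :
    (∫ x, φ x ∂μ) ^ 2 ≤ ∫ x, φ x ^ 2 ∂μ := by
  set m := ∫ x, φ x ∂μ with hm
  have h0 : 0 ≤ ∫ x, (φ x - m) ^ 2 ∂μ := integral_nonneg fun x => sq_nonneg _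
  have hexp : ∫ x, (φ x - m) ^ 2 ∂μ = ∫ x, φ x ^ 2 ∂μ - 2 * m * m + m ^ 2 := by
    have heq : (fun x => (φ x - m) ^ 2) = fun x => (φ x ^ 2 - (2 * m) * φ x) + m ^ 2 := by
      funext x; ring
    have i1 : Integrable (fun x => φ x ^ 2 - 2 * m * φ x) μ := hφ2.sub (hφ.const_mul (2 * m))
    rw [heq, integral_add i1 (integrable_const _),
      integral_sub hφ2 (hφ.const_mul (2 * m)), integral_const_mul]
    simp [← hm]
  nlinarith [h0, hexp]

lemma wass_diff_le {μ ν : Measure X} [IsProbabilityMeasure μ] [IsProbabilityMeasure ν]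
    {h : X → ℝ} (hm : StronglyMeasurable h) {K : ℝ} (hK : 0 ≤ K)
    (hlip : ∀ a b, |h a - h b| ≤ K * dist a b)
    (hμ : Integrable h μ) (hν : Integrable h ν)
    {C : ℝ} (hC : 0 ≤ C) (hW : wassDist μ ν ≤ ENNReal.ofReal C) :
    |∫ a, h a ∂μ - ∫ a, h a ∂ν| ≤ K * C := by
  refine le_of_forall_pos_le_add fun ε hε => ?_
  set δ : ℝ≥0∞ := ENNReal.ofReal (ε / (K + 1)) with hδ
  have hδ0 : 0 < δ := ENNReal.ofReal_pos.mpr (by positivity)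
  have hlt : wassDist μ ν < ENNReal.ofReal C + δ :=
    lt_of_le_of_lt hW (ENNReal.lt_add_right (by simp) hδ0.ne')
  rw [wassDist] at hlt
  simp only [iInf_lt_iff, Set.mem_setOf_eq] at hlt
  obtain ⟨γ, ⟨hγ1, hγ2⟩, hγd⟩ := hlt
  haveI : IsProbabilityMeasure γ := by
    constructor
    have h1 := congrArg (fun m : Measure X => m Set.univ) hγ1
    simpa [Measure.map_apply measurable_fst MeasurableSet.univ] using h1
  have hif : Integrable (fun q : X × X => h q.1) γ := by
    rw [← hγ1] at hμ
    exact (integrable_map_measure hm.aestronglyMeasurable measurable_fst.aemeasurable).mp hμ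
  have his : Integrable (fun q : X × X => h q.2) γ := by
    rw [← hγ2] at hν
    exact (integrable_map_measure hm.aestronglyMeasurable measurable_snd.aemeasurable).mp hν
  have e1 : ∫ a, h a ∂μ = ∫ q : X × X, h q.1 ∂γ := by
    rw [← hγ1, integral_map measurable_fst.aemeasurable hm.aestronglyMeasurable]
  have e2 : ∫ a, h a ∂ν = ∫ q : X × X, h q.2 ∂γ := by
    rw [← hγ2, integral_map measurable_snd.aemeasurable hm.aestronglyMeasurable]
  rw [e1, e2, ← integral_sub hif his]
  have step1 : |∫ q : X × X, (h q.1 - h q.2) ∂γ| ≤ ∫ q : X × X, |h q.1 - h q.2| ∂γ := by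
    simpa [Real.norm_eq_abs] using norm_integral_le_integral_norm (fun q : X × X => h q.1 - h q.2)
  have step2 : ∫ q : X × X, |h q.1 - h q.2| ∂γ
      = (∫⁻ q : X × X, ENNReal.ofReal |h q.1 - h q.2| ∂γ).toReal := by
    rw [integral_eq_lintegral_of_nonneg_ae (Filter.Eventually.of_forall fun q => abs_nonneg _)
      ((hif.sub his).aestronglyMeasurable.norm.congr (by
        filter_upwards with q
        simp [Real.norm_eq_abs]))]
  have step3 : ∫⁻ q : X × X, ENNReal.ofReal |h q.1 - h q.2| ∂γ
      ≤ ENNReal.ofReal K * (ENNReal.ofReal C + δ) := by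
    calc ∫⁻ q : X × X, ENNReal.ofReal |h q.1 - h q.2| ∂γ
        ≤ ∫⁻ q : X × X, ENNReal.ofReal K * edist q.1 q.2 ∂γ := by
          refine lintegral_mono fun q => ?_
          calc ENNReal.ofReal |h q.1 - h q.2| ≤ ENNReal.ofReal (K * dist q.1 q.2) :=
                ENNReal.ofReal_le_ofReal (hlip _ _)
            _ = ENNReal.ofReal K * ENNReal.ofReal (dist q.1 q.2) := ENNReal.ofReal_mul hK
            _ = ENNReal.ofReal K * edist q.1 q.2 := by rw [edist_dist]
      _ = ENNReal.ofReal K * ∫⁻ q : X × X, edist q.1 q.2 ∂γ := by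
          rw [lintegral_const_mul' _ _ ENNReal.ofReal_ne_top]
      _ ≤ ENNReal.ofReal K * (ENNReal.ofReal C + δ) := mul_le_mul_right hγd.le _
  have hfin : ENNReal.ofReal K * (ENNReal.ofReal C + δ) ≠ ⊤ := by finiteness
  have step4 : (∫⁻ q : X × X, ENNReal.ofReal |h q.1 - h q.2| ∂γ).toReal
      ≤ (ENNReal.ofReal K * (ENNReal.ofReal C + δ)).toReal :=
    ENNReal.toReal_mono hfin step3
  have step5 : (ENNReal.ofReal K * (ENNReal.ofReal C + δ)).toReal ≤ K * C + ε := by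
    rw [hδ, ← ENNReal.ofReal_add hC (by positivity), ← ENNReal.ofReal_mul hK,
      ENNReal.toReal_ofReal (by positivity)]
    have hfrac : K * (ε / (K + 1)) ≤ ε := by
      rw [mul_div_assoc'] at *
      rw [div_le_iff₀ (by positivity)]
      nlinarith
    nlinarith
  calc |∫ q : X × X, (h q.1 - h q.2) ∂γ| ≤ _ := step1
    _ = _ := step2
    _ ≤ (ENNReal.ofReal K * (ENNReal.ofReal C + δ)).toReal := step4
    _ ≤ K * C + ε := step5

end Aux

/-- If a Markov chain is geometrically contractive with rate `Δ ∈ (0,1)` and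
`∫∫ ψ(x,y)² π(dy) π(dx) < ∞`, then for every 1-Lipschitz mean-zero `g ∈ L²(π)`,
`∑_{n≥0} ‖Q^n g‖_{L²(π)} ≤ I / (1 − Δ)` where `I = [∫ (∫ ψ(x,y) π(dy))² π(dx)]^{1/2}`. -/
theorem stmt_7 {X : Type*} [MeasurableSpace X] [MetricSpace X] [PolishSpace X] [BorelSpace X]
    (Q : Kernel X X) [IsMarkovKernel Q] (π : Measure X) [IsProbabilityMeasure π]
    (hinv : π.bind (fun x => Q x) = π)
    (Δ : ℝ) (hΔ0 : 0 < Δ) (hΔ1 : Δ < 1)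
    (hGC : ∀ x y : X, wassDist (Q x) (Q y) ≤ ENNReal.ofReal (Δ * dist x y))
    (hπ2 : Integrable (fun x => ∫ y, (dist x y) ^ 2 ∂π) π)
    (hπ2' : ∀ x, Integrable (fun y => (dist x y) ^ 2) π)
    (g : X → ℝ) (hg : LipschitzWith 1 g) (hg0 : ∫ x, g x ∂π = 0)
    (hg2 : Integrable (fun x => (g x) ^ 2) π)
    (hgint : ∀ k x, Integrable g ((kiter Q k) x)) :
    Summable (fun n : ℕ => Real.sqrt (∫ x, (∫ z, g z ∂((kiter Q n) x)) ^ 2 ∂π)) ∧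
      (∑' n : ℕ, Real.sqrt (∫ x, (∫ z, g z ∂((kiter Q n) x)) ^ 2 ∂π)) ≤
        Real.sqrt (∫ x, (∫ y, dist x y ∂π) ^ 2 ∂π) / (1 - Δ) := by
  classical
  have hmk : ∀ n, IsMarkovKernel (kiter Q n) := kiter_markov Q
  set f : ℕ → X → ℝ := fun n x => ∫ z, g z ∂(kiter Q n) x with hf
  have g_sm : StronglyMeasurable g := hg.continuous.stronglyMeasurable
  have hbind : ∀ n, π.bind (kiter Q n) = π := by
    intro n
    induction n with
    | zero =>
      show π.bind ⇑(Kernel.id : Kernel X X) = π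
      have hc : ⇑(Kernel.id : Kernel X X) = fun x => Measure.dirac x :=
        funext fun x => Kernel.id_apply x
      rw [hc]
      exact Measure.bind_dirac
    | succ n ih =>
      haveI := hmk n
      rw [kiter_succ Q n]
      have hc : ⇑(kiter Q n ∘ₖ Q) = fun x => (Q x).bind (kiter Q n) :=
        funext fun x => Kernel.comp_apply _ _ x
      rw [hc, show (π.bind fun x => (Q x).bind (kiter Q n))
          = (π.bind (fun x => Q x)).bind (kiter Q n) from
        (Measure.bind_bind (Kernel.measurable Q).aemeasurable (Kernel.measurable (kiter Q n)).aemeasurable).symm,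
        hinv, ih]
  have hgπ : Integrable g π := by
    refine Integrable.mono' (((integrable_const (1:ℝ)).add hg2).div_const 2)
      g_sm.aestronglyMeasurable ?_
    filter_upwards with x
    rw [Real.norm_eq_abs]
    simp only [Pi.add_apply]
    nlinarith [sq_abs (g x), sq_nonneg (|g x| - 1)]
  have f_int_π : ∀ n, Integrable (f n) π := fun n => by
    haveI := hmk n
    exact integrable_integral_bind π (kiter Q n) g_sm (by rw [hbind n]; exact hgπ)
  have f_mean : ∀ n, ∫ x, f n x ∂π = 0 := fun n => by
    haveI := hmk n
    have h1 := integral_bind' π (kiter Q n) g_sm (by rw [hbind n]; exact hgπ)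
    rw [hbind n] at h1
    show ∫ x, ∫ z, g z ∂(kiter Q n) x ∂π = 0
    rw [← h1, hg0]
  have f_int_Q : ∀ n x, Integrable (f n) (Q x) := fun n x => by
    haveI := hmk n
    have h1 := hgint (n+1) x
    rw [kiter_succ Q n, Kernel.comp_apply] at h1
    exact integrable_integral_bind (Q x) (kiter Q n) g_sm h1
  have f_step : ∀ n x, f (n+1) x = ∫ z, f n z ∂(Q x) := fun n x => by
    haveI := hmk n
    have h1 := hgint (n+1) x
    rw [kiter_succ Q n, Kernel.comp_apply] at h1
    have h2 := integral_bind' (Q x) (kiter Q n) g_sm h1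
    show ∫ z, g z ∂(kiter Q (n+1)) x = _
    rw [kiter_succ Q n, Kernel.comp_apply, h2]
  have f_sm : ∀ n, StronglyMeasurable (f n) := fun n => by
    haveI := hmk n
    have := StronglyMeasurable.integral_kernel_prod_right' (κ := kiter Q n)
      (g_sm.comp_measurable measurable_snd)
    simpa using this
  have hcontr : ∀ n x y, |f n x - f n y| ≤ Δ ^ n * dist x y := by
    intro n
    induction n with
    | zero =>
      intro x y
      have hfx : ∀ x : X, f 0 x = g x := fun x => by
        show ∫ z, g z ∂(Kernel.id x) = g x
        rw [Kernel.id_apply, integral_dirac]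
      rw [hfx x, hfx y, pow_zero, one_mul, ← Real.dist_eq]
      simpa using hg.dist_le_mul x y
    | succ n ih =>
      intro x y
      rw [f_step n x, f_step n y]
      have hw := wass_diff_le (μ := Q x) (ν := Q y) (f_sm n) (pow_nonneg hΔ0.le n) ih
        (f_int_Q n x) (f_int_Q n y) (mul_nonneg hΔ0.le dist_nonneg) (hGC x y)
      calc |(∫ z, f n z ∂(Q x)) - ∫ z, f n z ∂(Q y)| ≤ Δ ^ n * (Δ * dist x y) := hw
        _ = Δ ^ (n+1) * dist x y := by ring
  set D : X → ℝ := fun x => ∫ y, dist x y ∂π with hD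
  have dist_int : ∀ x, Integrable (fun y => dist x y) π := fun x => by
    refine Integrable.mono' ((integrable_const (1:ℝ)).add (hπ2' x))
      (Continuous.dist continuous_const continuous_id).aestronglyMeasurable ?_
    filter_upwards with y
    rw [Real.norm_eq_abs, abs_of_nonneg dist_nonneg]
    simp only [Pi.add_apply]
    nlinarith [dist_nonneg (x := x) (y := y), sq_nonneg (dist x y - 1)]
  have hfb : ∀ n x, |f n x| ≤ Δ ^ n * D x := by
    intro n x
    have h1 : f n x = ∫ y, (f n x - f n y) ∂π := by
      rw [integral_sub (integrable_const _) (f_int_π n), f_mean n, integral_const]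
      simp
    rw [h1]
    calc |∫ y, (f n x - f n y) ∂π| ≤ ∫ y, |f n x - f n y| ∂π := by
          simpa [Real.norm_eq_abs] using
            norm_integral_le_integral_norm (μ := π) (fun y => f n x - f n y)
      _ ≤ ∫ y, Δ ^ n * dist x y ∂π := by
          refine integral_mono ((integrable_const _).sub (f_int_π n)).abs
            ((dist_int x).const_mul _) fun y => hcontr n x y
      _ = Δ ^ n * D x := integral_const_mul _ _
  have D_sm : StronglyMeasurable D := by
    have := StronglyMeasurable.integral_kernel_prod_right' (κ := Kernel.const X π)
      continuous_dist.stronglyMeasurable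
    simpa [Kernel.const_apply] using this
  have Dsq_int : Integrable (fun x => D x ^ 2) π := by
    refine Integrable.mono' hπ2 (D_sm.measurable.pow_const 2).aestronglyMeasurable ?_
    filter_upwards with x
    rw [Real.norm_eq_abs, abs_of_nonneg (sq_nonneg _)]
    exact sq_integral_le π (dist_int x) (hπ2' x)
  set I : ℝ := Real.sqrt (∫ x, D x ^ 2 ∂π) with hI
  have hbound : ∀ n, Real.sqrt (∫ x, f n x ^ 2 ∂π) ≤ Δ ^ n * I := by
    intro n
    have h2 : ∫ x, f n x ^ 2 ∂π ≤ (Δ ^ n) ^ 2 * ∫ x, D x ^ 2 ∂π := by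
      have hps : ∀ x, f n x ^ 2 ≤ (Δ ^ n) ^ 2 * D x ^ 2 := by
        intro x
        nlinarith [hfb n x, abs_nonneg (f n x), sq_abs (f n x),
          le_trans (abs_nonneg (f n x)) (hfb n x)]
      have hmono := integral_mono_of_nonneg
        (Filter.Eventually.of_forall fun x => sq_nonneg (f n x))
        (Dsq_int.const_mul ((Δ ^ n) ^ 2))
        (Filter.Eventually.of_forall hps)
      rwa [integral_const_mul] at hmono
    calc Real.sqrt (∫ x, f n x ^ 2 ∂π)
        ≤ Real.sqrt ((Δ ^ n) ^ 2 * ∫ x, D x ^ 2 ∂π) := Real.sqrt_le_sqrt h2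
      _ = Δ ^ n * I := by
          rw [Real.sqrt_mul (sq_nonneg _), Real.sqrt_sq (pow_nonneg hΔ0.le n), hI]
  have hgeo : Summable (fun n : ℕ => Δ ^ n * I) :=
    (summable_geometric_of_lt_one hΔ0.le hΔ1).mul_right I
  have hsum : Summable (fun n : ℕ => Real.sqrt (∫ x, f n x ^ 2 ∂π)) :=
    Summable.of_nonneg_of_le (fun n => Real.sqrt_nonneg _) hbound hgeo
  have hle : (∑' n : ℕ, Real.sqrt (∫ x, f n x ^ 2 ∂π)) ≤ I / (1 - Δ) := by
    calc (∑' n : ℕ, Real.sqrt (∫ x, f n x ^ 2 ∂π)) ≤ ∑' n : ℕ, Δ ^ n * I :=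
        Summable.tsum_le_tsum hbound hsum hgeo
      _ = (1 - Δ)⁻¹ * I := by rw [tsum_mul_right, tsum_geometric_of_lt_one hΔ0.le hΔ1]
      _ = I / (1 - Δ) := by rw [div_eq_mul_inv, mul_comm]
  simp only [hf, hI, hD] at hsum hle
  exact ⟨hsum, hle⟩
end
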